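/- For a graph G on finite vertex set X and probability distribution P on X: the infimum over orthogonal-projection representations {U_x} of G (projections on some finite-dimensional Hilbert space with U_x U_{x'} = 0 whenever x ≠ x' are non-adjacent in the complement sense used for representations) and density operators F of Σ_x P(x) log(1/Tr(U_x F)) equals the infimum over rank-one (unit vector) representations {u_x} of G and unit vectors f of Σ_x P(x) log(1/|⟨u_x|f⟩|²). (Marton's θ(G,P) equals the projective variant θ_sp(G,P).) -/

import Mathlib

open Matrix
open scoped ComplexOrder

noncomputable def IsDensity {d : ℕ} (A : Matrix (Fin d) (Fin d) ℂ) : Prop :=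
  A.PosSemidef ∧ A.trace = 1

def IsProb {Z : Type*} [Fintype Z] (P : Z → ℝ) : Prop :=
  (∀ z, 0 ≤ P z) ∧ ∑ z, P z = 1

noncomputable def dotc {Z : Type*} [Fintype Z] (u v : Z → ℂ) : ℂ :=
  ∑ p, star (u p) * v p

/-- Values `Σ_x P(x) log(1/Tr(U_x F))` achieved by projection representations
of `G` (in any finite dimension) together with a density operator `F`, with all
`Tr(U_x F) > 0` (the excluded cases correspond to the value `+∞`). -/
def thetaSpValues {X : Type*} [Fintype X] (G : SimpleGraph X) (P : X → ℝ) : Set ℝ :=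
  {r | ∃ d : ℕ, ∃ U : X → Matrix (Fin d) (Fin d) ℂ, ∃ F : Matrix (Fin d) (Fin d) ℂ,
    (∀ x, (U x).IsHermitian ∧ U x * U x = U x) ∧
    (∀ x x', x ≠ x' → ¬ G.Adj x x' → U x * U x' = 0) ∧
    IsDensity F ∧ (∀ x, 0 < ((U x * F).trace.re)) ∧
    r = ∑ x, P x * Real.log (1 / ((U x * F).trace.re))}

/-- Values `Σ_x P(x) log(1/|⟨u_x|f⟩|²)` achieved by orthonormal (unit-vector)
representations of `G` and unit vectors (handles) `f`. -/
def thetaMartonValues {X : Type*} [Fintype X] (G : SimpleGraph X) (P : X → ℝ) : Set ℝ :=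
  {r | ∃ d : ℕ, ∃ u : X → Fin d → ℂ, ∃ f : Fin d → ℂ,
    (∀ x, ∑ i, Complex.normSq (u x i) = 1) ∧
    (∀ x x', x ≠ x' → ¬ G.Adj x x' → dotc (u x) (u x') = 0) ∧
    (∑ i, Complex.normSq (f i) = 1) ∧
    (∀ x, 0 < Complex.normSq (dotc (u x) f)) ∧
    r = ∑ x, P x * Real.log (1 / Complex.normSq (dotc (u x) f))}

lemma star_dotc {Z : Type*} [Fintype Z] (u v : Z → ℂ) : star (dotc u v) = dotc v u := by
  unfold dotc
  rw [star_sum]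
  refine Finset.sum_congr rfl fun i _ => ?_
  rw [StarMul.star_mul, star_star, mul_comm]

lemma dotc_self {Z : Type*} [Fintype Z] (v : Z → ℂ) :
    dotc v v = ((∑ i, Complex.normSq (v i) : ℝ) : ℂ) := by
  unfold dotc
  push_cast
  exact Finset.sum_congr rfl fun i _ => by
    rw [Complex.star_def, ← Complex.normSq_eq_conj_mul_self]

lemma dotc_smul {Z : Type*} [Fintype Z] (c c' : ℂ) (u v : Z → ℂ) :
    dotc (fun k => c * u k) (fun k => c' * v k) = star c * c' * dotc u v := by
  unfold dotc
  rw [Finset.mul_sum]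
  refine Finset.sum_congr rfl fun i _ => ?_
  simp only []
  rw [StarMul.star_mul]
  ring

/-- outer product -/
noncomputable def outerM {d : ℕ} (v : Fin d → ℂ) : Matrix (Fin d) (Fin d) ℂ :=
  Matrix.of fun i j => v i * star (v j)

lemma outerM_herm {d : ℕ} (v : Fin d → ℂ) : (outerM v).IsHermitian := by
  ext i j
  simp only [outerM, Matrix.conjTranspose_apply, Matrix.of_apply]
  rw [StarMul.star_mul, star_star, mul_comm]

lemma outerM_mul_outerM {d : ℕ} (v w : Fin d → ℂ) :
    outerM v * outerM w = Matrix.of fun i j => dotc v w * (v i * star (w j)) := by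
  ext i j
  simp only [Matrix.mul_apply, outerM, Matrix.of_apply, dotc, Finset.sum_mul]
  exact Finset.sum_congr rfl fun k _ => by ring

lemma sum_mul_star_eq (d : ℕ) (v w : Fin d → ℂ) :
    ∑ i, v i * star (w i) = star (dotc v w) := by
  rw [star_dotc]
  exact Finset.sum_congr rfl fun i _ => mul_comm _ _

lemma trace_outerM_mul {d : ℕ} (v w : Fin d → ℂ) :
    (outerM v * outerM w).trace = ((Complex.normSq (dotc v w) : ℝ) : ℂ) := by
  rw [outerM_mul_outerM, ← Complex.mul_conj]
  simp only [Matrix.trace, Matrix.diag_apply, Matrix.of_apply, ← Finset.mul_sum]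
  rw [sum_mul_star_eq, Complex.star_def]

lemma outerM_posSemidef {d : ℕ} (v : Fin d → ℂ) : (outerM v).PosSemidef := by
  refine Matrix.PosSemidef.of_dotProduct_mulVec_nonneg (outerM_herm v) fun x => ?_
  have h1 : ∀ i, (outerM v *ᵥ x) i = v i * dotc v x := by
    intro i
    simp only [Matrix.mulVec, dotProduct, outerM, Matrix.of_apply, dotc, Finset.mul_sum]
    exact Finset.sum_congr rfl fun j _ => by ring
  have h2 : dotProduct (star x) (outerM v *ᵥ x) = star (dotc v x) * dotc v x := by
    simp only [dotProduct, Pi.star_apply]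
    calc ∑ i, star (x i) * (outerM v *ᵥ x) i
        = ∑ i, (star (x i) * v i) * dotc v x := by
          refine Finset.sum_congr rfl fun i _ => ?_
          rw [h1 i]; ring
      _ = (∑ i, star (x i) * v i) * dotc v x := by rw [Finset.sum_mul]
      _ = star (dotc v x) * dotc v x := by
          congr 1
          rw [star_dotc]
          rfl
  rw [h2]
  exact star_mul_self_nonneg _

lemma trace_outerM {d : ℕ} (v : Fin d → ℂ) :
    (outerM v).trace = ((∑ i, Complex.normSq (v i) : ℝ) : ℂ) := by
  simp only [Matrix.trace, Matrix.diag_apply, outerM, Matrix.of_apply]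
  push_cast
  exact Finset.sum_congr rfl fun i _ => by
    rw [Complex.star_def, Complex.mul_conj]

lemma herm_trace_real {d : ℕ} {A : Matrix (Fin d) (Fin d) ℂ} (hA : A.IsHermitian) :
    A.trace = ((A.trace.re : ℝ) : ℂ) := by
  have h : star A.trace = A.trace := by
    rw [← Matrix.trace_conjTranspose, hA.eq]
  exact ((Complex.conj_eq_iff_re).mp h).symm

lemma dotc_vec_eq_trace {d : ℕ} (A B : Matrix (Fin d) (Fin d) ℂ) :
    dotc (fun k : Fin (d*d) => A (finProdFinEquiv.symm k).1 (finProdFinEquiv.symm k).2)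
         (fun k : Fin (d*d) => B (finProdFinEquiv.symm k).1 (finProdFinEquiv.symm k).2)
      = (Aᴴ * B).trace := by
  unfold dotc
  rw [Fintype.sum_equiv (finProdFinEquiv (m := d) (n := d)).symm _
      (fun p : Fin d × Fin d => star (A p.1 p.2) * B p.1 p.2) (fun k => rfl)]
  rw [Fintype.sum_prod_type]
  simp only [Matrix.trace, Matrix.diag_apply, Matrix.mul_apply, Matrix.conjTranspose_apply]
  rw [Finset.sum_comm]

noncomputable def vecM {d : ℕ} (A : Matrix (Fin d) (Fin d) ℂ) : Fin (d*d) → ℂ :=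
  fun k => A (finProdFinEquiv.symm k).1 (finProdFinEquiv.symm k).2

lemma dotc_vecM_eq_trace {d : ℕ} (A B : Matrix (Fin d) (Fin d) ℂ) :
    dotc (vecM A) (vecM B) = (Aᴴ * B).trace :=
  dotc_vec_eq_trace A B

lemma dotc_smul_left {Z : Type*} [Fintype Z] (c : ℂ) (u v : Z → ℂ) :
    dotc (fun k => c * u k) v = star c * dotc u v := by
  unfold dotc
  rw [Finset.mul_sum]
  refine Finset.sum_congr rfl fun i _ => ?_
  simp only []
  rw [StarMul.star_mul]
  ring


lemma marton_subset_sp {X : Type*} [Fintype X] (G : SimpleGraph X) (P : X → ℝ) :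
    thetaMartonValues G P ⊆ thetaSpValues G P := by
  rintro r ⟨d, u, f, h1, h2, h3, h4, hr⟩
  refine ⟨d, fun x => outerM (u x), outerM f, ?_, ?_, ?_, ?_, ?_⟩
  · intro x
    refine ⟨outerM_herm _, ?_⟩
    rw [outerM_mul_outerM, dotc_self, h1 x]
    ext i j
    simp [outerM]
  · intro x x' hx hadj
    rw [outerM_mul_outerM, h2 x x' hx hadj]
    ext i j
    simp
  · exact ⟨outerM_posSemidef f, by rw [trace_outerM, h3]; norm_num⟩
  · intro x
    rw [trace_outerM_mul, Complex.ofReal_re]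
    exact h4 x
  · rw [hr]
    exact Finset.sum_congr rfl fun x _ => by rw [trace_outerM_mul, Complex.ofReal_re]

open scoped MatrixOrder in
lemma sp_subset_marton {X : Type*} [Fintype X] (G : SimpleGraph X) (P : X → ℝ) :
    thetaSpValues G P ⊆ thetaMartonValues G P := by
  rintro r ⟨d, U, F, hU, horth, hF, hpos, hr⟩
  have hSh : (CFC.sqrt F).IsHermitian := (CFC.sqrt_nonneg F).posSemidef.1
  have hSS : CFC.sqrt F * CFC.sqrt F = F := CFC.sqrt_mul_sqrt_self F hF.1.nonneg
  set S := CFC.sqrt F with hSdef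
  have hUh : ∀ x, (U x)ᴴ = U x := fun x => (hU x).1
  set t : X → ℝ := fun x => (U x * F).trace.re with htdef
  have ht : ∀ x, 0 < t x := hpos
  have hts : ∀ x, Real.sqrt (t x) * Real.sqrt (t x) = t x :=
    fun x => Real.mul_self_sqrt (ht x).le
  have htsne : ∀ x, Real.sqrt (t x) ≠ 0 :=
    fun x => (Real.sqrt_pos.mpr (ht x)).ne'
  set c : X → ℂ := fun x => (((Real.sqrt (t x))⁻¹ : ℝ) : ℂ) with hcdef
  have hstarc : ∀ x, star (c x) = c x := fun x => by
    simp [hcdef, Complex.star_def, Complex.conj_ofReal]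
  -- trace identities
  have key : ∀ x x', dotc (vecM (U x * S)) (vecM (U x' * S))
      = (S * (U x * U x') * S).trace := by
    intro x x'
    rw [dotc_vecM_eq_trace, Matrix.conjTranspose_mul, hSh.eq, hUh x]
    congr 1
    noncomm_ring
  have keyf : ∀ x, dotc (vecM (U x * S)) (vecM S) = (S * U x * S).trace := by
    intro x
    rw [dotc_vecM_eq_trace, Matrix.conjTranspose_mul, hSh.eq, hUh x]
  have hMh : ∀ x, (S * U x * S).IsHermitian := by
    intro x
    show (S * U x * S)ᴴ = S * U x * S
    rw [Matrix.conjTranspose_mul, Matrix.conjTranspose_mul, hSh.eq, hUh x, Matrix.mul_assoc]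
  have hMt : ∀ x, (S * U x * S).trace = (U x * F).trace := by
    intro x
    rw [Matrix.mul_assoc, Matrix.trace_mul_comm, Matrix.mul_assoc, hSS]
  have htr : ∀ x, (U x * F).trace = ((t x : ℝ) : ℂ) := by
    intro x
    conv_lhs => rw [← hMt x]
    rw [herm_trace_real (hMh x), hMt x]
  have dself : ∀ x, dotc (fun k => c x * vecM (U x * S) k) (fun k => c x * vecM (U x * S) k)
      = ((1 : ℝ) : ℂ) := by
    intro x
    rw [dotc_smul, hstarc x, key x x, (hU x).2, hMt x, htr x, hcdef]
    norm_cast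
    field_simp
    rw [← Complex.ofReal_pow, ← Complex.ofReal_mul, div_pow, one_pow, Real.sq_sqrt (ht x).le,
      one_div, inv_mul_cancel₀ (ht x).ne', Complex.ofReal_one]
  have dvf : ∀ x, dotc (fun k => c x * vecM (U x * S) k) (vecM S)
      = ((Real.sqrt (t x) : ℝ) : ℂ) := by
    intro x
    rw [dotc_smul_left, hstarc x, keyf x, hMt x, htr x, hcdef]
    rw [← Complex.ofReal_mul]
    norm_cast
    rw [inv_mul_eq_div, eq_comm, eq_div_iff (htsne x)]
    exact hts x
  have hnormSq : ∀ x, Complex.normSq (dotc (fun k => c x * vecM (U x * S) k) (vecM S)) = t x := by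
    intro x
    rw [dvf x, Complex.normSq_ofReal, hts x]
  refine ⟨d * d, fun x k => c x * vecM (U x * S) k, vecM S, ?_, ?_, ?_, ?_, ?_⟩
  · intro x
    have := dself x
    rw [dotc_self] at this
    exact_mod_cast this
  · intro x x' hx hadj
    rw [dotc_smul, key x x', horth x x' hx hadj]
    simp
  · have : dotc (vecM S) (vecM S) = ((1 : ℝ) : ℂ) := by
      rw [dotc_vecM_eq_trace, hSh.eq, hSS, hF.2]
      norm_num
    rw [dotc_self] at this
    exact_mod_cast this
  · intro x
    rw [hnormSq x]
    exact ht x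
  · rw [hr]
    exact Finset.sum_congr rfl fun x _ => by rw [hnormSq x]

lemma theta_sets_eq {X : Type*} [Fintype X] (G : SimpleGraph X) (P : X → ℝ) :
    thetaSpValues G P = thetaMartonValues G P :=
  Set.Subset.antisymm (sp_subset_marton G P) (marton_subset_sp G P)

/-- Marton's `θ(G,P)` equals its projective variant `θ_sp(G,P)`. -/
theorem thetaSp_eq_thetaMarton {X : Type*} [Fintype X] (G : SimpleGraph X)
    (P : X → ℝ) (hP : IsProb P) :
    sInf (thetaSpValues G P) = sInf (thetaMartonValues G P) := by
  rw [theta_sets_eq]
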